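/- Let 0 < ε < π and α > 0, |β| > α with α, β real, and let φ(t) = αt for t ∈ (−ε, 0], φ(t) = βt for t ∈ [0, ε). Let Δ_ε(t) = max(0, 1 − |t|/ε). Then for every integer n with nα ≥ 2, setting N = ⌊nα⌋ − 1, one has |S_N(Δ_ε e^{inφ})(0)| ≥ (1/2π)(log(nα/2) − 3α/(|β|−α)) − 4ε^{−1/2}. -/

import Mathlib

open MeasureTheory Filter

/-- The `k`-th Fourier coefficient of a function on the circle, identified with a
`2π`-periodic function on `ℝ`: `f̂(k) = (1/2π) ∫_{-π}^{π} f(t) e^{-ikt} dt`. -/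
noncomputable def fourierCoef (f : ℝ → ℂ) (k : ℤ) : ℂ :=
  (1 / (2 * Real.pi)) * ∫ t in (-Real.pi)..Real.pi, f t * Complex.exp (-(k : ℂ) * Complex.I * t)

/-- The `N`-th partial sum of the Fourier series: `S_N(f)(t) = ∑_{|k| ≤ N} f̂(k) e^{ikt}`. -/
noncomputable def partialFourierSum (f : ℝ → ℂ) (N : ℕ) (t : ℝ) : ℂ :=
  ∑ k ∈ Finset.Icc (-(N : ℤ)) (N : ℤ), fourierCoef f k * Complex.exp ((k : ℂ) * Complex.I * t)

/-- The norm of the space `U(𝕋)`: `‖f‖_U = sup_N ‖S_N(f)‖_{C(𝕋)}`. -/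
noncomputable def uNorm (f : ℝ → ℂ) : ℝ :=
  ⨆ N : ℕ, ⨆ t : ℝ, ‖partialFourierSum f N t‖

open Complex in
lemma exp_c_deriv (c : ℂ) (t : ℝ) : HasDerivAt (fun s : ℝ => Complex.exp (c * s)) (c * Complex.exp (c * t)) t := by
  have h1 := (Complex.hasDerivAt_exp ((c : ℂ) * t)).comp (t:ℂ)
      ((hasDerivAt_id (t:ℂ)).const_mul c)
  have h2 : HasDerivAt (fun z : ℂ => Complex.exp (c * z)) (c * Complex.exp (c * t)) (t:ℂ) := by
    exact h1.congr_deriv (by ring)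
  exact h2.comp_ofReal


open Complex in
lemma one_div_mul_I (a : ℂ) (ha : a ≠ 0) : 1/(a*I) = -(I/a) := by
  have h : (a * I) * (-(I / a)) = 1 := by
    field_simp
    rw [Complex.I_sq]
    ring
  exact (eq_one_div_of_mul_eq_one_right h).symm


open Complex in
lemma triangle_integral (ε l : ℝ) (hε : 0 < ε) (hl : l ≠ 0) :
    ∫ t in (0:ℝ)..ε, (1 - (t:ℂ)/ε) * Complex.exp ((l:ℂ) * I * t)
      = I / l + (1 - Complex.exp ((l:ℂ) * I * ε)) / (ε * l^2) := by
  have hlc : (l:ℂ) ≠ 0 := by exact_mod_cast hl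
  have hec : (ε:ℂ) ≠ 0 := by exact_mod_cast hε.ne'
  have hli : (l:ℂ) * I ≠ 0 := mul_ne_zero hlc I_ne_zero
  set c : ℂ := (l:ℂ) * I with hc
  have key : ∀ t : ℝ, HasDerivAt (fun s : ℝ =>
      (1 - (s:ℂ)/ε) * Complex.exp (c * s) / c + (1/(ε:ℂ)) * Complex.exp (c * s) / c^2)
      ((1 - (t:ℂ)/ε) * Complex.exp (c * t)) t := by
    intro t
    have he := exp_c_deriv c t
    have h2 : HasDerivAt (fun s : ℝ => (1 - (s:ℂ)/ε)) (-(1/(ε:ℂ))) t := by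
      have : HasDerivAt (fun s : ℝ => ((s:ℝ):ℂ)) 1 t := Complex.ofRealCLM.hasDerivAt
      simpa using ((this.div_const (ε:ℂ)).const_sub 1)
    have h3 := ((h2.mul he).div_const c).add (((he.const_mul (1/(ε:ℂ)))).div_const (c^2))
    refine h3.congr_deriv ?_
    field_simp
    ring
  have heq := intervalIntegral.integral_eq_sub_of_hasDerivAt (f := fun s : ℝ =>
      (1 - (s:ℂ)/ε) * Complex.exp (c * s) / c + (1/(ε:ℂ)) * Complex.exp (c * s) / c^2)
      (f' := fun t : ℝ => (1 - (t:ℂ)/ε) * Complex.exp (c * t)) (a := 0) (b := ε)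
      (fun t _ => key t) (by
        apply Continuous.intervalIntegrable
        continuity)
  rw [heq]
  rw [show ((ε:ℝ):ℂ)/(ε:ℂ) = 1 from div_self hec]
  rw [hc]
  rw [show ((l:ℂ)*I)^2 = -((l:ℂ)^2) by rw [mul_pow, Complex.I_sq]; ring]
  simp only [Complex.ofReal_zero, mul_zero, Complex.exp_zero, sub_self, zero_mul, zero_div,
    zero_add, mul_one, one_mul, sub_zero]
  rw [one_div_mul_I l hlc]
  simp only [div_neg, neg_div]
  field_simp
  ring


open Complex in
lemma triangle_integral_neg (ε l : ℝ) (hε : 0 < ε) (hl : l ≠ 0) :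
    ∫ t in (-ε:ℝ)..0, (1 + (t:ℂ)/ε) * Complex.exp ((l:ℂ) * I * t)
      = -(I / l) + (1 - Complex.exp (-((l:ℂ) * I * ε))) / (ε * l^2) := by
  have h := intervalIntegral.integral_comp_neg (a := 0) (b := ε)
    (fun t : ℝ => (1 + (t:ℂ)/ε) * Complex.exp ((l:ℂ)*I*t))
  simp only [neg_zero] at h
  rw [← h]
  have : ∀ x : ℝ, (1 + ((-x:ℝ):ℂ)/ε) * Complex.exp ((l:ℂ)*I*(-x:ℝ))
      = (1 - (x:ℂ)/ε) * Complex.exp (((-l:ℝ):ℂ) * I * x) := by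
    intro x; push_cast; ring_nf
  rw [intervalIntegral.integral_congr (g := fun x : ℝ => (1 - (x:ℂ)/ε) * Complex.exp (((-l:ℝ):ℂ) * I * x)) (fun x _ => this x)]
  rw [triangle_integral ε (-l) hε (neg_ne_zero.mpr hl)]
  push_cast
  rw [div_neg]
  ring_nf


open Complex in
lemma coef_eq (ε α β : ℝ) (hε0 : 0 < ε) (hεπ : ε < Real.pi) (n : ℤ) (k : ℤ) :
    fourierCoef (fun t => ((max 0 (1 - |t| / ε) : ℝ) : ℂ) *
        Complex.exp (Complex.I * (n : ℂ) * (if t ≤ 0 then α * t else β * t : ℝ))) k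
    = (1 / (2 * Real.pi)) *
        ((∫ t in (-ε:ℝ)..0, (1 + (t:ℂ)/ε) * Complex.exp ((((n:ℝ)*α - k : ℝ):ℂ) * I * t))
        + (∫ t in (0:ℝ)..ε, (1 - (t:ℂ)/ε) * Complex.exp ((((n:ℝ)*β - k : ℝ):ℂ) * I * t))) := by
  set g : ℝ → ℂ := fun t => (((max 0 (1 - |t| / ε) : ℝ) : ℂ) *
      Complex.exp (Complex.I * (n : ℂ) * (if t ≤ 0 then α * t else β * t : ℝ)))
      * Complex.exp (-(k : ℂ) * Complex.I * t) with hg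
  have hgc : Continuous g := by
    apply Continuous.mul
    apply Continuous.mul
    · exact Complex.continuous_ofReal.comp
        (continuous_const.max ((continuous_const.sub (continuous_abs.div_const ε))))
    · apply Complex.continuous_exp.comp
      apply Continuous.mul continuous_const
      apply Complex.continuous_ofReal.comp
      apply Continuous.if_le (continuous_const.mul continuous_id)
        (continuous_const.mul continuous_id) continuous_id continuous_const
      intro x hx; simp only [id_eq] at hx; rw [hx]; simp
    · exact Complex.continuous_exp.comp (by continuity)
  have hint : ∀ a b : ℝ, IntervalIntegrable g volume a b := fun a b =>
    hgc.intervalIntegrable a b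
  have hεπ' : -Real.pi ≤ -ε := by linarith
  have hε0' : (-ε:ℝ) ≤ 0 := by linarith
  have hsplit : ∫ t in (-Real.pi)..Real.pi, g t
      = (∫ t in (-Real.pi)..(-ε:ℝ), g t) + (∫ t in (-ε:ℝ)..0, g t)
        + (∫ t in (0:ℝ)..ε, g t) + (∫ t in (ε:ℝ)..Real.pi, g t) := by
    rw [intervalIntegral.integral_add_adjacent_intervals (hint _ _) (hint _ _),
        intervalIntegral.integral_add_adjacent_intervals (hint _ _) (hint _ _),
        intervalIntegral.integral_add_adjacent_intervals (hint _ _) (hint _ _)]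
  have hzero1 : (∫ t in (-Real.pi)..(-ε:ℝ), g t) = 0 := by
    rw [intervalIntegral.integral_congr (g := fun _ => 0) _, intervalIntegral.integral_zero]
    intro t ht
    rw [Set.uIcc_of_le hεπ'] at ht
    have : |t| ≥ ε := by
      rw [abs_of_nonpos (le_trans ht.2 (by linarith))]
      linarith [ht.2]
    have hmax : max 0 (1 - |t| / ε) = 0 := max_eq_left (by
      have : 1 ≤ |t| / ε := (le_div_iff₀ hε0).mpr (by linarith)
      linarith)
    simp [hg, hmax]
  have hzero2 : (∫ t in (ε:ℝ)..Real.pi, g t) = 0 := by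
    rw [intervalIntegral.integral_congr (g := fun _ => 0) _, intervalIntegral.integral_zero]
    intro t ht
    rw [Set.uIcc_of_le hεπ.le] at ht
    have : |t| ≥ ε := by
      rw [_root_.abs_of_nonneg (le_trans hε0.le ht.1)]
      exact ht.1
    have hmax : max 0 (1 - |t| / ε) = 0 := max_eq_left (by
      have : 1 ≤ |t| / ε := (le_div_iff₀ hε0).mpr (by linarith)
      linarith)
    simp [hg, hmax]
  have hmid1 : (∫ t in (-ε:ℝ)..0, g t)
      = ∫ t in (-ε:ℝ)..0, (1 + (t:ℂ)/ε) * Complex.exp ((((n:ℝ)*α - k : ℝ):ℂ) * I * t) := by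
    apply intervalIntegral.integral_congr
    intro t ht
    rw [Set.uIcc_of_le hε0'] at ht
    obtain ⟨ht1, ht2⟩ := ht
    have hmax : max 0 (1 - |t| / ε) = 1 + t/ε := by
      rw [abs_of_nonpos ht2, show 1 - -t/ε = 1 + t/ε by ring]
      apply max_eq_right
      have : (-1:ℝ) ≤ t/ε := (le_div_iff₀ hε0).mpr (by linarith)
      linarith
    simp only [hg, if_pos ht2, hmax]
    rw [mul_assoc, ← Complex.exp_add]
    congr 1
    · push_cast; ring
    · congr 1; push_cast; ring
  have hmid2 : (∫ t in (0:ℝ)..ε, g t)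
      = ∫ t in (0:ℝ)..ε, (1 - (t:ℂ)/ε) * Complex.exp ((((n:ℝ)*β - k : ℝ):ℂ) * I * t) := by
    apply intervalIntegral.integral_congr
    intro t ht
    rw [Set.uIcc_of_le hε0.le] at ht
    obtain ⟨ht1, ht2⟩ := ht
    have hmax : max 0 (1 - |t| / ε) = 1 - t/ε := by
      rw [_root_.abs_of_nonneg ht1]
      apply max_eq_right
      have : t/ε ≤ 1 := (div_le_one hε0).mpr ht2
      linarith
    by_cases h0 : t ≤ 0
    · have ht0 : t = 0 := le_antisymm h0 ht1
      simp only [hg, if_pos h0, hmax, ht0]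
      norm_num
    · simp only [hg, if_neg h0, hmax]
      rw [mul_assoc, ← Complex.exp_add]
      congr 1
      · push_cast; ring
      · congr 1; push_cast; ring
  rw [fourierCoef]
  rw [show (∫ t in (-Real.pi)..Real.pi, (fun t => ((max 0 (1 - |t| / ε) : ℝ) : ℂ) *
        Complex.exp (Complex.I * (n : ℂ) * (if t ≤ 0 then α * t else β * t : ℝ))) t
        * Complex.exp (-(k : ℂ) * Complex.I * t)) = ∫ t in (-Real.pi)..Real.pi, g t from rfl]
  rw [hsplit, hzero1, hzero2, hmid1, hmid2]
  ring


lemma sum_Icc_range {M : Type*} [AddCommMonoid M] (N : ℕ) (g : ℤ → M) :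
    ∑ k ∈ Finset.Icc (-(N:ℤ)) N, g k = ∑ j ∈ Finset.range (2*N+1), g ((N:ℤ) - j) := by
  apply Finset.sum_nbij' (i := fun k => ((N:ℤ) - k).toNat) (j := fun j => (N:ℤ) - j)
  · intro a ha
    simp only [Finset.mem_Icc] at ha
    simp only [Finset.mem_range]
    omega
  · intro a ha
    simp only [Finset.mem_range] at ha
    simp only [Finset.mem_Icc]
    omega
  · intro a ha
    simp only [Finset.mem_Icc] at ha
    omega
  · intro a ha
    simp only [Finset.mem_range] at ha
    omega
  · intro a ha
    simp only [Finset.mem_Icc] at ha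
    congr 1
    omega


lemma sum_Icc_neg {M : Type*} [AddCommMonoid M] (N : ℕ) (g : ℤ → M) :
    ∑ k ∈ Finset.Icc (-(N:ℤ)) N, g k = ∑ k ∈ Finset.Icc (-(N:ℤ)) N, g (-k) := by
  apply Finset.sum_nbij' (i := fun k => -k) (j := fun k => -k) <;>
    intro a ha <;> simp only [Finset.mem_Icc] at * <;> try omega
  simp


lemma harm_lower : ∀ (M : ℕ) (δ : ℝ), 0 < δ →
    Real.log ((δ + M)/δ) ≤ ∑ j ∈ Finset.range M, 1/(δ + j) := by
  intro M
  induction M with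
  | zero => intro δ hδ; simp [div_self hδ.ne']
  | succ M ih =>
    intro δ hδ
    rw [Finset.sum_range_succ]
    push_cast
    have harg : (δ + ((M:ℝ) + 1))/δ = ((δ + (M:ℝ) + 1)/(δ + M)) * ((δ + M)/δ) := by
      field_simp
      ring
    rw [harg, Real.log_mul (by positivity) (by positivity)]
    have h2 : Real.log ((δ + (M:ℝ) + 1)/(δ + M)) ≤ 1/(δ + M) := by
      have h := Real.log_le_sub_one_of_pos (x := (δ + (M:ℝ) + 1)/(δ + M)) (by positivity)
      have he : (δ + (M:ℝ) + 1)/(δ + M) - 1 = 1/(δ+M) := by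
        field_simp
        ring
      linarith [he ▸ h]
    have h3 := ih δ hδ
    linarith


lemma psum_le : ∀ (M : ℕ), ∑ j ∈ Finset.range M, 1/(((j:ℝ)+1) * Real.sqrt ((j:ℝ)+1)) ≤ 3 := by
  have key : ∀ M : ℕ, 1 ≤ M → ∑ j ∈ Finset.range M, 1/(((j:ℝ)+1) * Real.sqrt ((j:ℝ)+1))
      ≤ 3 - 2/Real.sqrt M := by
    intro M
    induction M with
    | zero => omega
    | succ M ih =>
      intro _
      by_cases hM : 1 ≤ M
      · have hMp : (0:ℝ) < M := by exact_mod_cast hM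
        rw [Finset.sum_range_succ]
        have hsM : 0 < Real.sqrt M := Real.sqrt_pos.mpr hMp
        have hsM1 : 0 < Real.sqrt ((M:ℝ)+1) := Real.sqrt_pos.mpr (by positivity)
        have hmono : Real.sqrt M ≤ Real.sqrt ((M:ℝ)+1) := Real.sqrt_le_sqrt (by linarith)
        have hsq : Real.sqrt ((M:ℝ)+1) * Real.sqrt ((M:ℝ)+1) = (M:ℝ)+1 :=
          Real.mul_self_sqrt (by positivity)
        have msq : Real.sqrt (M:ℝ) * Real.sqrt (M:ℝ) = (M:ℝ) :=
          Real.mul_self_sqrt (by positivity)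
        have hstep : 1/(((M:ℝ)+1) * Real.sqrt ((M:ℝ)+1)) ≤ 2/Real.sqrt M - 2/Real.sqrt ((M:ℝ)+1) := by
          rw [div_sub_div _ _ hsM.ne' hsM1.ne', div_le_div_iff₀ (by positivity) (by positivity)]
          nlinarith [sq_nonneg (Real.sqrt ((M:ℝ)+1) - Real.sqrt M), hsq, msq, hmono,
            hsM.le, hsM1.le, mul_pos hsM hsM1]
        have h4 := ih hM
        push_cast
        linarith
      · have hM0 : M = 0 := by omega
        subst hM0
        norm_num
  intro M
  by_cases hM : 1 ≤ M
  · have h5 := key M hM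
    have h6 : (0:ℝ) ≤ 2/Real.sqrt M := by positivity
    linarith
  · have : M = 0 := by omega
    subst this; norm_num


lemma err_sum (N : ℕ) (x : ℝ) (hx : (N:ℝ)+1 ≤ x) :
    ∑ k ∈ Finset.Icc (-(N:ℤ)) N, 1/(|x - (k:ℝ)| * Real.sqrt |x - (k:ℝ)|) ≤ 3 := by
  have step : ∀ k ∈ Finset.Icc (-(N:ℤ)) N,
      1/(|x - (k:ℝ)| * Real.sqrt |x - (k:ℝ)|)
        ≤ 1/((((N:ℝ)+1-k)) * Real.sqrt ((N:ℝ)+1-k)) := by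
    intro k hk
    simp only [Finset.mem_Icc] at hk
    have hkN : (k:ℝ) ≤ N := by exact_mod_cast hk.2
    have hw1 : (1:ℝ) ≤ (N:ℝ)+1-k := by linarith
    have hwx : (N:ℝ)+1-k ≤ x - k := by linarith
    have habs : |x - (k:ℝ)| = x - k := abs_of_pos (by linarith)
    rw [habs]
    apply one_div_le_one_div_of_le (by positivity)
    have := Real.sqrt_le_sqrt hwx
    apply mul_le_mul hwx this (Real.sqrt_nonneg _) (by linarith)
  calc ∑ k ∈ Finset.Icc (-(N:ℤ)) N, 1/(|x - (k:ℝ)| * Real.sqrt |x - (k:ℝ)|)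
      ≤ ∑ k ∈ Finset.Icc (-(N:ℤ)) N, 1/((((N:ℝ)+1-k)) * Real.sqrt ((N:ℝ)+1-k)) :=
        Finset.sum_le_sum step
    _ = ∑ j ∈ Finset.range (2*N+1), 1/(((j:ℝ)+1) * Real.sqrt ((j:ℝ)+1)) := by
        rw [sum_Icc_range N (fun k => 1/((((N:ℝ)+1-k)) * Real.sqrt ((N:ℝ)+1-k)))]
        apply Finset.sum_congr rfl
        intro j hj
        have : ((N:ℝ)+1-(((N:ℤ) - j : ℤ):ℝ)) = (j:ℝ)+1 := by push_cast; ring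
        rw [this]
    _ ≤ 3 := psum_le _


lemma inv_sum_ge (N : ℕ) (x : ℝ) (h1 : (N:ℝ)+1 ≤ x) (h2 : x ≤ (N:ℝ)+2) :
    Real.log (x/2) ≤ ∑ k ∈ Finset.Icc (-(N:ℤ)) N, 1/(x - (k:ℝ)) := by
  have hδ : 0 < x - N := by linarith
  have heq : ∑ k ∈ Finset.Icc (-(N:ℤ)) N, 1/(x - (k:ℝ))
      = ∑ j ∈ Finset.range (2*N+1), 1/((x - N) + j) := by
    rw [sum_Icc_range N (fun k => 1/(x - (k:ℝ)))]
    apply Finset.sum_congr rfl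
    intro j hj
    have : x - (((N:ℤ) - j : ℤ):ℝ) = (x - N) + j := by push_cast; ring
    rw [this]
  rw [heq]
  refine le_trans ?_ (harm_lower (2*N+1) (x-N) hδ)
  apply Real.log_le_log (by linarith)
  rw [div_le_div_iff₀ (by norm_num) hδ]
  push_cast
  nlinarith [hδ, h1, h2]


open Complex in
lemma norm_one_sub_exp (x : ℝ) : ‖1 - Complex.exp ((x:ℂ)*I)‖ ≤ min 2 (2*|x|) := by
  apply le_min
  · have h1 : ‖Complex.exp ((x:ℂ)*I)‖ = 1 := by
      simpa using Complex.abs_exp_ofReal_mul_I x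
    calc ‖1 - Complex.exp ((x:ℂ)*I)‖ ≤ ‖(1:ℂ)‖ + ‖Complex.exp ((x:ℂ)*I)‖ := norm_sub_le _ _
      _ = 2 := by rw [h1]; norm_num
  · by_cases hx : |x| ≤ 1
    · have h := Complex.norm_exp_sub_one_le (x := (x:ℂ)*I) (by
        rw [norm_mul, Complex.norm_I, mul_one, Complex.norm_real, Real.norm_eq_abs]; exact hx)
      rw [norm_sub_rev]
      calc ‖Complex.exp ((x:ℂ)*I) - 1‖ ≤ 2 * ‖(x:ℂ)*I‖ := h
        _ = 2*|x| := by simp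
    · push_neg at hx
      have h1 : ‖Complex.exp ((x:ℂ)*I)‖ = 1 := by
        simpa using Complex.abs_exp_ofReal_mul_I x
      calc ‖1 - Complex.exp ((x:ℂ)*I)‖ ≤ ‖(1:ℂ)‖ + ‖Complex.exp ((x:ℂ)*I)‖ := norm_sub_le _ _
        _ = 2 := by rw [h1]; norm_num
        _ ≤ 2*|x| := by linarith


open Complex in
lemma rem_bound (ε l : ℝ) (hε : 0 < ε) (hl : 1 ≤ |l|) :
    ‖(1 - Complex.exp ((l:ℂ)*I*ε))/((ε:ℂ)*(l:ℂ)^2)‖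
      ≤ 2/(Real.sqrt ε * (|l| * Real.sqrt |l|)) := by
  have hl0 : l ≠ 0 := by intro h; rw [h] at hl; simp at hl; linarith
  have harg : ((l:ℂ)*I*ε) = (((l*ε:ℝ)):ℂ)*I := by push_cast; ring
  rw [harg, norm_div]
  have hnum : ‖1 - Complex.exp ((((l*ε:ℝ)):ℂ)*I)‖ ≤ 2 * Real.sqrt |l| * Real.sqrt ε := by
    refine le_trans (norm_one_sub_exp (l*ε)) ?_
    have habs : |l*ε| = |l| * ε := by rw [abs_mul, abs_of_pos hε]
    have hsq : Real.sqrt (|l| * ε) = Real.sqrt |l| * Real.sqrt ε := Real.sqrt_mul (abs_nonneg l) ε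
    rw [habs]
    by_cases hu : |l| * ε ≤ 1
    · refine le_trans (min_le_right _ _) ?_
      have h1 : |l| * ε ≤ Real.sqrt (|l| * ε) := by
        nlinarith [Real.mul_self_sqrt (show (0:ℝ) ≤ |l| * ε by positivity),
          Real.sqrt_nonneg (|l| * ε), (Real.sqrt_le_one (x := |l| * ε)).mpr hu]
      nlinarith [hsq]
    · refine le_trans (min_le_left _ _) ?_
      push_neg at hu
      have h1 : (1:ℝ) ≤ Real.sqrt (|l| * ε) := by
        rw [show (1:ℝ) = Real.sqrt 1 from (Real.sqrt_one).symm]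
        exact Real.sqrt_le_sqrt (by linarith)
      nlinarith [hsq]
  have hden : ‖((ε:ℂ)*(l:ℂ)^2)‖ = ε * l^2 := by
    rw [norm_mul, norm_pow]
    simp [Complex.norm_real, abs_of_pos hε, _root_.sq_abs]
  rw [hden]
  rw [div_le_div_iff₀ (by positivity) (by positivity)]
  calc ‖1 - Complex.exp ((((l*ε:ℝ)):ℂ)*I)‖ * (Real.sqrt ε * (|l| * Real.sqrt |l|))
      ≤ (2 * Real.sqrt |l| * Real.sqrt ε) * (Real.sqrt ε * (|l| * Real.sqrt |l|)) := by
        apply mul_le_mul_of_nonneg_right hnum (by positivity)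
    _ = 2 * (ε * l^2) := by
        have h1 : Real.sqrt ε * Real.sqrt ε = ε := Real.mul_self_sqrt hε.le
        have h2 : Real.sqrt |l| * Real.sqrt |l| = |l| := Real.mul_self_sqrt (abs_nonneg l)
        have h3 : |l| * |l| = l^2 := by rw [← abs_mul, abs_mul_self]; ring
        rw [show (2 * Real.sqrt |l| * Real.sqrt ε) * (Real.sqrt ε * (|l| * Real.sqrt |l|))
            = 2 * (Real.sqrt ε * Real.sqrt ε)*((Real.sqrt |l| * Real.sqrt |l|) * |l|) by ring, h1, h2, h3]
        ring



set_option maxHeartbeats 2000000 in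
theorem partial_sum_lower_bound_case_one (ε α β : ℝ) (hε0 : 0 < ε) (hεπ : ε < Real.pi)
    (hα : 0 < α) (hβ : α < |β|) (n : ℤ) (hna : 2 ≤ (n : ℝ) * α)
    (N : ℕ) (hN : (N : ℤ) = ⌊(n : ℝ) * α⌋ - 1) :
    (1 / (2 * Real.pi)) * (Real.log ((n : ℝ) * α / 2) - 3 * α / (|β| - α))
        - 4 / Real.sqrt ε ≤
      ‖partialFourierSum (fun t => ((max 0 (1 - |t| / ε) : ℝ) : ℂ) *
        Complex.exp (Complex.I * (n : ℂ) * (if t ≤ 0 then α * t else β * t : ℝ))) N 0‖ := by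
  have hπ := Real.pi_pos
  have hπ3 := Real.pi_gt_three
  have hsε : 0 < Real.sqrt ε := Real.sqrt_pos.mpr hε0
  have hβα : 0 < |β| - α := sub_pos.mpr hβ
  have hn0 : (0:ℝ) < (n:ℝ) := by nlinarith
  have hNc : ((N:ℕ):ℝ) = ((⌊(n:ℝ)*α⌋:ℤ):ℝ) - 1 := by exact_mod_cast hN
  have hfl : ((⌊(n:ℝ)*α⌋:ℤ):ℝ) ≤ (n:ℝ)*α := Int.floor_le _
  have hfl2 : (n:ℝ)*α < ((⌊(n:ℝ)*α⌋:ℤ):ℝ) + 1 := Int.lt_floor_add_one _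
  have hN1 : ((N:ℕ):ℝ) + 1 ≤ (n:ℝ)*α := by rw [hNc]; linarith
  have hN2 : (n:ℝ)*α ≤ ((N:ℕ):ℝ) + 2 := by rw [hNc]; linarith
  have habsnb : |(n:ℝ)*β| = (n:ℝ)*|β| := by rw [abs_mul, abs_of_pos hn0]
  have hNb : ((N:ℕ):ℝ) + 1 ≤ (n:ℝ)*|β| := le_trans hN1 (by nlinarith)
  set T := Finset.Icc (-(N:ℤ)) (N:ℤ) with hT
  -- per-k facts
  have hμ1 : ∀ k ∈ T, (1:ℝ) ≤ (n:ℝ)*α - k := by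
    intro k hk; simp only [hT, Finset.mem_Icc] at hk
    have h2 : (k:ℝ) ≤ N := by exact_mod_cast hk.2
    linarith
  have hlamabs : ∀ k ∈ T, (n:ℝ)*|β| - N ≤ |(n:ℝ)*β - k| := by
    intro k hk; simp only [hT, Finset.mem_Icc] at hk
    have h1 : |(k:ℝ)| ≤ N := by
      rw [abs_le]
      constructor
      · exact_mod_cast hk.1
      · exact_mod_cast hk.2
    calc (n:ℝ)*|β| - N ≤ |(n:ℝ)*β| - |(k:ℝ)| := by rw [habsnb]; linarith
      _ ≤ |(n:ℝ)*β - k| := abs_sub_abs_le_abs_sub _ _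
  have hcpos : (0:ℝ) < (n:ℝ)*|β| - N := by linarith
  have hlam1 : ∀ k ∈ T, (1:ℝ) ≤ |(n:ℝ)*β - k| := fun k hk => le_trans (by linarith) (hlamabs k hk)
  -- coefficient formula
  have hcoef : ∀ k ∈ T, fourierCoef (fun t => ((max 0 (1 - |t| / ε) : ℝ) : ℂ) *
        Complex.exp (Complex.I * (n : ℂ) * (if t ≤ 0 then α * t else β * t : ℝ))) k
      = (1 / (2 * Real.pi)) *
        ((-(Complex.I / (((n:ℝ)*α - (k:ℝ) : ℝ):ℂ))
            + (1 - Complex.exp (-((((n:ℝ)*α - (k:ℝ) : ℝ):ℂ) * Complex.I * (ε:ℝ))))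
              / ((ε:ℝ) * (((n:ℝ)*α - (k:ℝ) : ℝ):ℂ)^2))
        + (Complex.I / (((n:ℝ)*β - (k:ℝ) : ℝ):ℂ)
            + (1 - Complex.exp ((((n:ℝ)*β - (k:ℝ) : ℝ):ℂ) * Complex.I * (ε:ℝ)))
              / ((ε:ℝ) * (((n:ℝ)*β - (k:ℝ) : ℝ):ℂ)^2))) := by
    intro k hk
    have hμne : (n:ℝ)*α - (k:ℝ) ≠ 0 := by have := hμ1 k hk; linarith
    have hlamne : (n:ℝ)*β - (k:ℝ) ≠ 0 := by
      have := hlam1 k hk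
      intro h; rw [h] at this; simp at this; linarith
    rw [coef_eq ε α β hε0 hεπ n k,
        triangle_integral_neg ε ((n:ℝ)*α - (k:ℝ)) hε0 hμne,
        triangle_integral ε ((n:ℝ)*β - (k:ℝ)) hε0 hlamne]
  -- abbreviations
  set Smu : ℝ := ∑ k ∈ T, 1/((n:ℝ)*α - (k:ℝ)) with hSmu
  set Sla : ℝ := ∑ k ∈ T, 1/((n:ℝ)*β - (k:ℝ)) with hSla
  set RR : ℂ := ∑ k ∈ T,
      ((1 - Complex.exp (-((((n:ℝ)*α - (k:ℝ) : ℝ):ℂ) * Complex.I * (ε:ℝ))))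
          / ((ε:ℝ) * (((n:ℝ)*α - (k:ℝ) : ℝ):ℂ)^2)
        + (1 - Complex.exp ((((n:ℝ)*β - (k:ℝ) : ℝ):ℂ) * Complex.I * (ε:ℝ)))
          / ((ε:ℝ) * (((n:ℝ)*β - (k:ℝ) : ℝ):ℂ)^2)) with hRRdef
  -- sum of coefficients
  have hS : partialFourierSum (fun t => ((max 0 (1 - |t| / ε) : ℝ) : ℂ) *
        Complex.exp (Complex.I * (n : ℂ) * (if t ≤ 0 then α * t else β * t : ℝ))) N 0
      = ∑ k ∈ T, fourierCoef (fun t => ((max 0 (1 - |t| / ε) : ℝ) : ℂ) *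
        Complex.exp (Complex.I * (n : ℂ) * (if t ≤ 0 then α * t else β * t : ℝ))) k := by
    unfold partialFourierSum
    apply Finset.sum_congr rfl
    intro k _
    simp
  have hsplit : ∑ k ∈ T, fourierCoef (fun t => ((max 0 (1 - |t| / ε) : ℝ) : ℂ) *
        Complex.exp (Complex.I * (n : ℂ) * (if t ≤ 0 then α * t else β * t : ℝ))) k
      = (1 / (2 * (Real.pi:ℝ)) : ℂ) *
          ((-Complex.I) * ((Smu:ℝ):ℂ) + (Complex.I * ((Sla:ℝ):ℂ) + RR)) := by
    rw [Finset.sum_congr rfl hcoef, ← Finset.mul_sum]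
    congr 1
    have e0 : ∑ k ∈ T, ((-(Complex.I / (((n:ℝ)*α - (k:ℝ) : ℝ):ℂ))
            + (1 - Complex.exp (-((((n:ℝ)*α - (k:ℝ) : ℝ):ℂ) * Complex.I * (ε:ℝ))))
              / ((ε:ℝ) * (((n:ℝ)*α - (k:ℝ) : ℝ):ℂ)^2))
        + (Complex.I / (((n:ℝ)*β - (k:ℝ) : ℝ):ℂ)
            + (1 - Complex.exp ((((n:ℝ)*β - (k:ℝ) : ℝ):ℂ) * Complex.I * (ε:ℝ)))
              / ((ε:ℝ) * (((n:ℝ)*β - (k:ℝ) : ℝ):ℂ)^2)))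
        = (∑ k ∈ T, -(Complex.I / (((n:ℝ)*α - (k:ℝ) : ℝ):ℂ)))
          + ((∑ k ∈ T, Complex.I / (((n:ℝ)*β - (k:ℝ) : ℝ):ℂ)) + RR) := by
      rw [hRRdef, ← Finset.sum_add_distrib, ← Finset.sum_add_distrib]
      apply Finset.sum_congr rfl
      intro k _
      ring
    rw [e0]
    congr 1
    · have c1 : ((Smu:ℝ):ℂ) = ∑ k ∈ T, ((1/((n:ℝ)*α - (k:ℝ)) : ℝ) : ℂ) := by
        rw [hSmu]; push_cast; rfl
      rw [c1, Finset.mul_sum]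
      apply Finset.sum_congr rfl
      intro k _
      push_cast
      ring
    congr 1
    have c2 : ((Sla:ℝ):ℂ) = ∑ k ∈ T, ((1/((n:ℝ)*β - (k:ℝ)) : ℝ) : ℂ) := by
      rw [hSla]; push_cast; rfl
    rw [c2, Finset.mul_sum]
    apply Finset.sum_congr rfl
    intro k _
    push_cast
    ring
  -- main lower bound on Smu
  have hSmulog : Real.log ((n:ℝ)*α/2) ≤ Smu := by
    rw [hSmu]
    exact inv_sum_ge N ((n:ℝ)*α) hN1 hN2
  -- bound on |Sla|
  have hcard : T.card = 2*N+1 := by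
    rw [hT, Int.card_Icc]
    omega
  have hSlabound : |Sla| ≤ 3*α/(|β| - α) := by
    have h1 : |Sla| ≤ ∑ k ∈ T, |1/((n:ℝ)*β - (k:ℝ))| := by
      rw [hSla]; exact Finset.abs_sum_le_sum_abs _ _
    have h2 : ∀ k ∈ T, |1/((n:ℝ)*β - (k:ℝ))| ≤ 1/((n:ℝ)*|β| - N) := by
      intro k hk
      rw [abs_div, abs_one]
      exact one_div_le_one_div_of_le hcpos (hlamabs k hk)
    have h3 : ∑ k ∈ T, ((1:ℝ)/((n:ℝ)*|β| - N)) = (2*(N:ℝ)+1) * (1/((n:ℝ)*|β| - N)) := by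
      rw [Finset.sum_const, hcard, nsmul_eq_mul]
      push_cast
      ring
    have h4 : (2*(N:ℝ)+1) * (1/((n:ℝ)*|β| - N)) ≤ 3*α/(|β| - α) := by
      rw [mul_one_div, div_le_div_iff₀ hcpos hβα]
      nlinarith [mul_le_mul_of_nonneg_right (show ((N:ℕ):ℝ) ≤ (n:ℝ)*α - 1 by linarith) hβα.le,
        mul_le_mul_of_nonneg_left (show ((N:ℕ):ℝ) ≤ (n:ℝ)*α - 1 by linarith)
          (by positivity : (0:ℝ) ≤ 3*α),
        mul_nonneg (mul_nonneg hn0.le hα.le) hβα.le]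
    calc |Sla| ≤ ∑ k ∈ T, |1/((n:ℝ)*β - (k:ℝ))| := h1
      _ ≤ ∑ k ∈ T, ((1:ℝ)/((n:ℝ)*|β| - N)) := Finset.sum_le_sum h2
      _ = (2*(N:ℝ)+1) * (1/((n:ℝ)*|β| - N)) := h3
      _ ≤ 3*α/(|β| - α) := h4
  -- error sum bound
  have hra : ∀ k ∈ T, ‖(1 - Complex.exp (-((((n:ℝ)*α - (k:ℝ) : ℝ):ℂ) * Complex.I * (ε:ℝ))))
          / ((ε:ℝ) * (((n:ℝ)*α - (k:ℝ) : ℝ):ℂ)^2)‖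
      ≤ 2/(Real.sqrt ε * (|(n:ℝ)*α - (k:ℝ)| * Real.sqrt |(n:ℝ)*α - (k:ℝ)|)) := by
    intro k hk
    have h1 : 1 ≤ |(-((n:ℝ)*α - (k:ℝ)))| := by
      rw [abs_neg]
      rw [abs_of_pos (by linarith [hμ1 k hk])]
      exact hμ1 k hk
    have hrb := rem_bound ε (-((n:ℝ)*α - (k:ℝ))) hε0 h1
    have e : (1 - Complex.exp (-((((n:ℝ)*α - (k:ℝ) : ℝ):ℂ) * Complex.I * (ε:ℝ))))
          / ((ε:ℝ) * (((n:ℝ)*α - (k:ℝ) : ℝ):ℂ)^2)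
        = (1 - Complex.exp (((-((n:ℝ)*α - (k:ℝ)) : ℝ):ℂ) * Complex.I * (ε:ℝ)))
          / ((ε:ℝ) * ((-((n:ℝ)*α - (k:ℝ)) : ℝ):ℂ)^2) := by
      push_cast
      ring_nf
    rw [e]
    refine le_trans hrb ?_
    rw [abs_neg]
  have hrbb : ∀ k ∈ T, ‖(1 - Complex.exp ((((n:ℝ)*β - (k:ℝ) : ℝ):ℂ) * Complex.I * (ε:ℝ)))
          / ((ε:ℝ) * (((n:ℝ)*β - (k:ℝ) : ℝ):ℂ)^2)‖
      ≤ 2/(Real.sqrt ε * (|(n:ℝ)*β - (k:ℝ)| * Real.sqrt |(n:ℝ)*β - (k:ℝ)|)) := by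
    intro k hk
    exact rem_bound ε ((n:ℝ)*β - (k:ℝ)) hε0 (hlam1 k hk)
  have herrx : ∑ k ∈ T, 1/(|(n:ℝ)*α - (k:ℝ)| * Real.sqrt |(n:ℝ)*α - (k:ℝ)|) ≤ 3 :=
    err_sum N ((n:ℝ)*α) hN1
  have herry : ∑ k ∈ T, 1/(|(n:ℝ)*β - (k:ℝ)| * Real.sqrt |(n:ℝ)*β - (k:ℝ)|) ≤ 3 := by
    rcases le_or_gt 0 β with hb | hb
    · refine err_sum N ((n:ℝ)*β) ?_
      rwa [abs_of_nonneg hb] at hNb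
    · rw [hT, sum_Icc_neg N (fun k => 1/(|(n:ℝ)*β - (k:ℝ)| * Real.sqrt |(n:ℝ)*β - (k:ℝ)|))]
      have e : ∀ k ∈ Finset.Icc (-(N:ℤ)) (N:ℤ),
          1/(|(n:ℝ)*β - ((-k:ℤ):ℝ)| * Real.sqrt |(n:ℝ)*β - ((-k:ℤ):ℝ)|)
          = 1/(|(-((n:ℝ)*β)) - (k:ℝ)| * Real.sqrt |(-((n:ℝ)*β)) - (k:ℝ)|) := by
        intro k _
        rw [show (n:ℝ)*β - ((-k:ℤ):ℝ) = -((-((n:ℝ)*β)) - (k:ℝ)) by push_cast; ring, abs_neg]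
      rw [Finset.sum_congr rfl e]
      refine err_sum N (-((n:ℝ)*β)) ?_
      have : |β| = -β := abs_of_neg hb
      rw [this] at hNb
      linarith [hNb]
  have hRRbound : ‖RR‖ ≤ 12/Real.sqrt ε := by
    have hterm : ∀ k ∈ T, ‖(1 - Complex.exp (-((((n:ℝ)*α - (k:ℝ) : ℝ):ℂ) * Complex.I * (ε:ℝ))))
          / ((ε:ℝ) * (((n:ℝ)*α - (k:ℝ) : ℝ):ℂ)^2)
        + (1 - Complex.exp ((((n:ℝ)*β - (k:ℝ) : ℝ):ℂ) * Complex.I * (ε:ℝ)))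
          / ((ε:ℝ) * (((n:ℝ)*β - (k:ℝ) : ℝ):ℂ)^2)‖
        ≤ (2/Real.sqrt ε) * (1/(|(n:ℝ)*α - (k:ℝ)| * Real.sqrt |(n:ℝ)*α - (k:ℝ)|))
          + (2/Real.sqrt ε) * (1/(|(n:ℝ)*β - (k:ℝ)| * Real.sqrt |(n:ℝ)*β - (k:ℝ)|)) := by
      intro k hk
      refine le_trans (norm_add_le _ _) ?_
      have e1 : (2/Real.sqrt ε) * (1/(|(n:ℝ)*α - (k:ℝ)| * Real.sqrt |(n:ℝ)*α - (k:ℝ)|))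
          = 2/(Real.sqrt ε * (|(n:ℝ)*α - (k:ℝ)| * Real.sqrt |(n:ℝ)*α - (k:ℝ)|)) := by
        rw [div_mul_div_comm, mul_one]
      have e2 : (2/Real.sqrt ε) * (1/(|(n:ℝ)*β - (k:ℝ)| * Real.sqrt |(n:ℝ)*β - (k:ℝ)|))
          = 2/(Real.sqrt ε * (|(n:ℝ)*β - (k:ℝ)| * Real.sqrt |(n:ℝ)*β - (k:ℝ)|)) := by
        rw [div_mul_div_comm, mul_one]
      rw [e1, e2]
      exact add_le_add (hra k hk) (hrbb k hk)
    calc ‖RR‖ ≤ ∑ k ∈ T, ‖(1 - Complex.exp (-((((n:ℝ)*α - (k:ℝ) : ℝ):ℂ) * Complex.I * (ε:ℝ))))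
          / ((ε:ℝ) * (((n:ℝ)*α - (k:ℝ) : ℝ):ℂ)^2)
        + (1 - Complex.exp ((((n:ℝ)*β - (k:ℝ) : ℝ):ℂ) * Complex.I * (ε:ℝ)))
          / ((ε:ℝ) * (((n:ℝ)*β - (k:ℝ) : ℝ):ℂ)^2)‖ := by
          rw [hRRdef]; exact norm_sum_le _ _
      _ ≤ ∑ k ∈ T, ((2/Real.sqrt ε) * (1/(|(n:ℝ)*α - (k:ℝ)| * Real.sqrt |(n:ℝ)*α - (k:ℝ)|))
          + (2/Real.sqrt ε) * (1/(|(n:ℝ)*β - (k:ℝ)| * Real.sqrt |(n:ℝ)*β - (k:ℝ)|))) :=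
          Finset.sum_le_sum hterm
      _ = (2/Real.sqrt ε) * (∑ k ∈ T, 1/(|(n:ℝ)*α - (k:ℝ)| * Real.sqrt |(n:ℝ)*α - (k:ℝ)|))
          + (2/Real.sqrt ε) * (∑ k ∈ T, 1/(|(n:ℝ)*β - (k:ℝ)| * Real.sqrt |(n:ℝ)*β - (k:ℝ)|)) := by
          rw [Finset.sum_add_distrib, Finset.mul_sum, Finset.mul_sum]
      _ ≤ (2/Real.sqrt ε) * 3 + (2/Real.sqrt ε) * 3 := by
          have hpos : (0:ℝ) ≤ 2/Real.sqrt ε := by positivity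
          exact add_le_add (mul_le_mul_of_nonneg_left herrx hpos)
            (mul_le_mul_of_nonneg_left herry hpos)
      _ = 12/Real.sqrt ε := by ring
  -- triangle inequality on the big sum
  have hTnorm : Real.log ((n:ℝ)*α/2) - |Sla| - ‖RR‖
      ≤ ‖(-Complex.I) * ((Smu:ℝ):ℂ) + (Complex.I * ((Sla:ℝ):ℂ) + RR)‖ := by
    set a : ℂ := (-Complex.I) * ((Smu:ℝ):ℂ) with ha
    set b : ℂ := Complex.I * ((Sla:ℝ):ℂ) + RR with hb
    have h3 : ‖a‖ ≤ ‖a + b‖ + ‖b‖ := by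
      have := norm_sub_le (a+b) b
      simpa using this
    have h4 : ‖a‖ = |Smu| := by
      rw [ha, norm_mul, norm_neg, Complex.norm_I, one_mul, Complex.norm_real,
        Real.norm_eq_abs]
    have h5 : ‖b‖ ≤ |Sla| + ‖RR‖ := by
      refine le_trans (norm_add_le _ _) ?_
      rw [norm_mul, Complex.norm_I, one_mul, Complex.norm_real, Real.norm_eq_abs]
    have h6 : Smu ≤ |Smu| := le_abs_self _
    linarith [h3, h4 ▸ h3, hSmulog]
  have hsc : ‖(1 / (2 * (Real.pi:ℝ)) : ℂ)‖ = 1/(2*Real.pi) := by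
    rw [show ((1 / (2 * (Real.pi:ℝ)) : ℂ)) = (((1/(2*Real.pi) : ℝ)):ℂ) by push_cast; ring,
      Complex.norm_real, Real.norm_eq_abs, abs_of_pos (by positivity)]
  rw [hS, hsplit, norm_mul, hsc]
  have hq : (1/(2*Real.pi)) * (Real.log ((n:ℝ)*α/2) - |Sla| - ‖RR‖)
      ≤ (1/(2*Real.pi)) * ‖(-Complex.I) * ((Smu:ℝ):ℂ) + (Complex.I * ((Sla:ℝ):ℂ) + RR)‖ :=
    mul_le_mul_of_nonneg_left hTnorm (by positivity)
  have hc2 : (0:ℝ) ≤ 1/(2*Real.pi) := by positivity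
  have k1 : (0:ℝ) ≤ (1/(2*Real.pi)) * (3*α/(|β| - α) - |Sla|) :=
    mul_nonneg hc2 (by linarith)
  have k2 : (0:ℝ) ≤ (1/(2*Real.pi)) * (12/Real.sqrt ε - ‖RR‖) :=
    mul_nonneg hc2 (by linarith)
  have k3 : (1/(2*Real.pi)) * (12/Real.sqrt ε) ≤ 4/Real.sqrt ε := by
    rw [show (1/(2*Real.pi)) * (12/Real.sqrt ε) = 6/(Real.pi * Real.sqrt ε) by
      field_simp; ring]
    rw [div_le_div_iff₀ (by positivity) hsε]
    nlinarith [hπ3, hsε]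
  have expand : (1/(2*Real.pi)) * (Real.log ((n:ℝ)*α/2) - |Sla| - ‖RR‖)
      = (1/(2*Real.pi)) * (Real.log ((n:ℝ)*α/2) - 3*α/(|β| - α))
        + (1/(2*Real.pi)) * (3*α/(|β| - α) - |Sla|)
        + (1/(2*Real.pi)) * (12/Real.sqrt ε - ‖RR‖)
        - (1/(2*Real.pi)) * (12/Real.sqrt ε) := by ring
  have hfin : (1/(2*Real.pi)) * (Real.log ((n:ℝ)*α/2) - 3*α/(|β| - α)) - 4/Real.sqrt ε
      ≤ (1/(2*Real.pi)) * (Real.log ((n:ℝ)*α/2) - |Sla| - ‖RR‖) := by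
    rw [expand]
    linarith
  calc (1/(2*Real.pi)) * (Real.log ((n:ℝ)*α/2) - 3*α/(|β| - α)) - 4/Real.sqrt ε
      ≤ (1/(2*Real.pi)) * (Real.log ((n:ℝ)*α/2) - |Sla| - ‖RR‖) := hfin
    _ ≤ (1/(2*Real.pi)) * ‖(-Complex.I) * ((Smu:ℝ):ℂ) + (Complex.I * ((Sla:ℝ):ℂ) + RR)‖ := hq
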